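/- Define g(t) = ta + log(b − a·e^{t(b−a)}) − log(b − a) for real a < 0 < b. Then g(0) = 0, g′(0) = 0, and g″(t) ≤ (b − a)²/4 for all t. -/

import Mathlib

theorem stmt_6 (a b : ℝ) (ha : a < 0) (hb : 0 < b) :
    let g : ℝ → ℝ := fun t =>
      t * a + Real.log (b - a * Real.exp (t * (b - a))) - Real.log (b - a)
    g 0 = 0 ∧ deriv g 0 = 0 ∧ ∀ t : ℝ, deriv (deriv g) t ≤ (b - a) ^ 2 / 4 := by
  intro g
  have hD : ∀ t : ℝ, 0 < b - a * Real.exp (t * (b - a)) := by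
    intro t
    have := Real.exp_pos (t * (b - a))
    nlinarith
  have hgd : ∀ t : ℝ, HasDerivAt g
      (a + (-a * (b - a) * Real.exp (t * (b - a))) / (b - a * Real.exp (t * (b - a)))) t := by
    intro t
    have h1 : HasDerivAt (fun t : ℝ => t * (b - a)) (b - a) t := by
      simpa using (hasDerivAt_id t).mul_const (b - a)
    have h2 : HasDerivAt (fun t : ℝ => Real.exp (t * (b - a)))
        (Real.exp (t * (b - a)) * (b - a)) t := h1.exp
    have h3 : HasDerivAt (fun t : ℝ => b - a * Real.exp (t * (b - a)))
        (-(a * (Real.exp (t * (b - a)) * (b - a)))) t :=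
      (h2.const_mul a).const_sub b
    have h4 : HasDerivAt (fun t : ℝ => Real.log (b - a * Real.exp (t * (b - a))))
        (-(a * (Real.exp (t * (b - a)) * (b - a))) / (b - a * Real.exp (t * (b - a)))) t :=
      h3.log (hD t).ne'
    have h5 : HasDerivAt (fun t : ℝ => t * a) a t := by
      simpa using (hasDerivAt_id t).mul_const a
    have := (h5.add h4).sub_const (Real.log (b - a))
    exact this.congr_deriv (by ring)
  have hderiv : deriv g = fun t =>
      a + (-a * (b - a) * Real.exp (t * (b - a))) / (b - a * Real.exp (t * (b - a))) := by
    funext t; exact (hgd t).deriv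
  refine ⟨by simp [g], ?_, ?_⟩
  · rw [hderiv]
    have hba : b - a ≠ 0 := by nlinarith
    simp
    field_simp
    ring
  · intro t
    rw [hderiv]
    set E := Real.exp (t * (b - a)) with hE
    have hEpos : 0 < E := Real.exp_pos _
    have h1 : HasDerivAt (fun t : ℝ => t * (b - a)) (b - a) t := by
      simpa using (hasDerivAt_id t).mul_const (b - a)
    have h2 : HasDerivAt (fun t : ℝ => Real.exp (t * (b - a))) (E * (b - a)) t := h1.exp
    have hN : HasDerivAt (fun t : ℝ => -a * (b - a) * Real.exp (t * (b - a)))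
        (-a * (b - a) * (E * (b - a))) t := h2.const_mul _
    have hDd : HasDerivAt (fun t : ℝ => b - a * Real.exp (t * (b - a)))
        (-(a * (E * (b - a)))) t := (h2.const_mul a).const_sub b
    have hdiv : HasDerivAt (fun t : ℝ =>
        a + (-a * (b - a) * Real.exp (t * (b - a))) / (b - a * Real.exp (t * (b - a))))
        ((-a * (b - a) * (E * (b - a)) * (b - a * E) -
          (-a * (b - a) * E) * (-(a * (E * (b - a))))) / (b - a * E) ^ 2) t :=
      (hN.div hDd (hD t).ne').const_add a
    rw [hdiv.deriv]
    have hDt : 0 < b - a * E := hD t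
    rw [div_le_div_iff₀ (by positivity) (by norm_num)]
    nlinarith [sq_nonneg ((b - a) * (b + a * E)), mul_pos hEpos hb, sq_nonneg (b - a)]
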